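/- Let U ∈ ℂ^{m×p} and V ∈ ℂ^{q×m}. The subspaces R(U) and N(V) are complementary in ℂ^m (i.e. R(U) + N(V) = ℂ^m and R(U) ∩ N(V) = {0}) if and only if rank(U) = rank(V) = rank(VU). -/

import Mathlib

open Matrix

/-- The four Penrose conditions characterizing the Moore-Penrose inverse. -/
def IsMoorePenrose {m n : ℕ} (A : Matrix (Fin m) (Fin n) ℂ)
    (X : Matrix (Fin n) (Fin m) ℂ) : Prop :=
  A * X * A = A ∧ X * A * X = X ∧ (A * X)ᴴ = A * X ∧ (X * A)ᴴ = X * A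

/-- The range (column space) of a matrix, as a subspace of Euclidean space. -/
noncomputable def mrange {m n : ℕ} (A : Matrix (Fin m) (Fin n) ℂ) :
    Submodule ℂ (EuclideanSpace ℂ (Fin m)) :=
  LinearMap.range (Matrix.toEuclideanLin A)

/-- The null space of a matrix, as a subspace of Euclidean space. -/
noncomputable def mker {m n : ℕ} (A : Matrix (Fin m) (Fin n) ℂ) :
    Submodule ℂ (EuclideanSpace ℂ (Fin n)) :=
  LinearMap.ker (Matrix.toEuclideanLin A)

lemma toEuclideanLin_eq_aux {m n : ℕ} (A : Matrix (Fin m) (Fin n) ℂ) :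
    Matrix.toEuclideanLin A =
      ((WithLp.linearEquiv 2 ℂ (Fin m → ℂ)).symm.toLinearMap ∘ₗ A.mulVecLin) ∘ₗ
        (WithLp.linearEquiv 2 ℂ (Fin n → ℂ)).toLinearMap := by
  ext x
  simp [Matrix.toEuclideanLin_apply]

lemma finrank_mrange {m n : ℕ} (A : Matrix (Fin m) (Fin n) ℂ) :
    Module.finrank ℂ (mrange A) = A.rank := by
  rw [mrange, toEuclideanLin_eq_aux, LinearMap.range_comp, LinearEquiv.range,
    Submodule.map_top, LinearMap.range_comp, LinearEquiv.finrank_map_eq]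
  rfl

lemma toEuclideanLin_mul_aux {m p q : ℕ} (U : Matrix (Fin m) (Fin p) ℂ)
    (V : Matrix (Fin q) (Fin m) ℂ) :
    Matrix.toEuclideanLin (V * U) =
      (Matrix.toEuclideanLin V) ∘ₗ (Matrix.toEuclideanLin U) := by
  ext x
  simp [Matrix.toEuclideanLin_apply, Matrix.mulVec_mulVec]

/-- `R(U)` and `N(V)` are complementary subspaces of `ℂ^m` if and only if
`rank(U) = rank(V) = rank(VU)`. -/
theorem stmt4 {m p q : ℕ} (U : Matrix (Fin m) (Fin p) ℂ) (V : Matrix (Fin q) (Fin m) ℂ) :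
    (mrange U ⊔ mker V = ⊤ ∧ mrange U ⊓ mker V = ⊥) ↔
      (U.rank = V.rank ∧ V.rank = (V * U).rank) := by
  set R := mrange U with hR
  set K := mker V with hK
  have hU : Module.finrank ℂ R = U.rank := finrank_mrange U
  have hV : V.rank + Module.finrank ℂ K = m := by
    have h := LinearMap.finrank_range_add_finrank_ker (Matrix.toEuclideanLin V)
    rw [show LinearMap.range (Matrix.toEuclideanLin V) = mrange V from rfl,
      finrank_mrange V] at h
    rw [finrank_euclideanSpace_fin] at h
    exact h
  -- rank-nullity for V restricted to R
  have hc : (V * U).rank + Module.finrank ℂ (R ⊓ K : Submodule ℂ _) =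
      U.rank := by
    have h := LinearMap.finrank_range_add_finrank_ker
      ((Matrix.toEuclideanLin V).domRestrict R)
    rw [LinearMap.range_domRestrict, LinearMap.ker_domRestrict] at h
    have h1 : Module.finrank ℂ (Submodule.map (Matrix.toEuclideanLin V) R) = (V * U).rank := by
      rw [← finrank_mrange (V * U), mrange, toEuclideanLin_mul_aux, LinearMap.range_comp]
      rfl
    have h2 : Module.finrank ℂ ((LinearMap.ker (Matrix.toEuclideanLin V)).comap R.subtype) =
        Module.finrank ℂ (R ⊓ K : Submodule ℂ _) := by
      rw [← Submodule.finrank_map_subtype_eq R, Submodule.map_comap_subtype]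
      rfl
    rw [h1, h2] at h
    rw [h, hU]
  have hsum := Submodule.finrank_sup_add_finrank_inf_eq R K
  have htop : Module.finrank ℂ (EuclideanSpace ℂ (Fin m)) = m := finrank_euclideanSpace_fin
  constructor
  · rintro ⟨h1, h2⟩
    rw [h1, h2] at hsum
    simp only [finrank_top, htop, finrank_bot] at hsum
    have hd : Module.finrank ℂ (R ⊓ K : Submodule ℂ _) = 0 := by
      rw [h2]; exact finrank_bot ℂ _
    omega
  · rintro ⟨h1, h2⟩
    have hd : Module.finrank ℂ (R ⊓ K : Submodule ℂ _) = 0 := by omega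
    have hbot : R ⊓ K = ⊥ := Submodule.finrank_eq_zero.mp hd
    refine ⟨?_, hbot⟩
    apply Submodule.eq_top_of_finrank_eq
    rw [htop]
    omega
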